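/- For the sequence b with b(-1)=0, b(0)=1, b(n)=(n+2)(b(n-1)-b(n-2)), and for every integer n ≥ 3, gcd(n² − n − 1, b(n−3) + n·b(n−4)) = gcd(n² − n − 1, (n−1)!). -/

import Mathlib

def B : ℕ → ℤ
  | 0 => 0
  | 1 => 1
  | (n + 2) => (n + 3) * (B (n + 1) - B n)

/-- Sum of factorials 0! + 1! + ... + k!, as an integer. -/
def Fsum : ℕ → ℤ
  | 0 => 1
  | (k + 1) => Fsum k + (Nat.factorial (k + 1) : ℤ)

lemma two_mul_B_pair (k : ℕ) :
    2 * B k = ((k : ℤ) + 1) * Fsum (k + 1) - ((k : ℤ) + 2) * (Nat.factorial (k + 1) : ℤ) ∧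
    2 * B (k + 1) = ((k : ℤ) + 2) * Fsum (k + 2) - ((k : ℤ) + 3) * (Nat.factorial (k + 2) : ℤ) := by
  induction k with
  | zero =>
      constructor <;> simp [B, Fsum, Nat.factorial]
  | succ m ih =>
      refine ⟨ih.2, ?_⟩
      have h1 := ih.1
      have h2 := ih.2
      have hB : B (m + 2) = ((m : ℤ) + 3) * (B (m + 1) - B m) := by
        rw [B]
      have hF2 : Fsum (m + 2) = Fsum (m + 1) + (Nat.factorial (m + 2) : ℤ) := rfl
      have hF3 : Fsum (m + 3) = Fsum (m + 2) + (Nat.factorial (m + 3) : ℤ) := rfl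
      have hf3 : (Nat.factorial (m + 3) : ℤ) = ((m : ℤ) + 3) * (Nat.factorial (m + 2) : ℤ) := by
        rw [Nat.factorial_succ]; push_cast; ring
      have hf2 : (Nat.factorial (m + 2) : ℤ) = ((m : ℤ) + 2) * (Nat.factorial (m + 1) : ℤ) := by
        rw [Nat.factorial_succ]; push_cast; ring
      have hstep : 2 * B (m + 1 + 1) = ((m : ℤ) + 3) * (2 * B (m + 1) - 2 * B m) := by
        show 2 * B (m + 2) = _
        rw [hB]; ring
      rw [hstep, h1, h2]
      push_cast
      rw [hF3, hF2, hf3, hf2]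
      ring

lemma key_identity (k : ℕ) :
    2 * (B (k + 1) + ((k : ℤ) + 3) * B k) =
      ((k : ℤ)^2 + 5 * k + 5) * Fsum (k + 1) - ((k : ℤ) + 4) * (Nat.factorial (k + 2) : ℤ) := by
  have h1 := (two_mul_B_pair k).1
  have h2 := (two_mul_B_pair k).2
  have hF : Fsum (k + 2) = Fsum (k + 1) + (Nat.factorial (k + 2) : ℤ) := rfl
  have : 2 * (B (k + 1) + ((k : ℤ) + 3) * B k) =
      2 * B (k + 1) + ((k : ℤ) + 3) * (2 * B k) := by ring
  have hf2 : (Nat.factorial (k + 2) : ℤ) = ((k : ℤ) + 2) * (Nat.factorial (k + 1) : ℤ) := by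
    rw [Nat.factorial_succ]; push_cast; ring
  rw [this, h1, h2, hF, hf2]
  ring

/-- For n ≥ 3, gcd(n² − n − 1, b(n−3) + n·b(n−4)) = gcd(n² − n − 1, (n−1)!),
where b(n−3) = B(n−2) and b(n−4) = B(n−3) in the shifted indexing. -/
theorem gcd_b_eq_gcd_factorial (n : ℕ) (hn : 3 ≤ n) :
    Int.gcd ((n : ℤ)^2 - n - 1) (B (n - 2) + (n : ℤ) * B (n - 3)) =
      Int.gcd ((n : ℤ)^2 - n - 1) ((Nat.factorial (n - 1) : ℤ)) := by
  obtain ⟨k, rfl⟩ : ∃ k, n = k + 3 := ⟨n - 3, by omega⟩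
  have e2 : k + 3 - 2 = k + 1 := by omega
  have e3 : k + 3 - 3 = k := by omega
  have e1 : k + 3 - 1 = k + 2 := by omega
  rw [e1, e2, e3]
  set m : ℤ := ((k : ℤ) + 3)^2 - ((k : ℤ) + 3) - 1 with hm
  have hmcast : ((k + 3 : ℕ) : ℤ)^2 - ((k + 3 : ℕ) : ℤ) - 1 = m := by push_cast [hm]; ring
  have hLcast : B (k + 1) + ((k + 3 : ℕ) : ℤ) * B k = B (k + 1) + ((k : ℤ) + 3) * B k := by
    push_cast; ring
  rw [hmcast, hLcast]
  set L : ℤ := B (k + 1) + ((k : ℤ) + 3) * B k with hL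
  set f : ℤ := (Nat.factorial (k + 2) : ℤ) with hf
  -- key linear relation: 2 * L = m * Fsum (k+1) - (k+4) * f
  have key : 2 * L = m * Fsum (k + 1) - ((k : ℤ) + 4) * f := by
    rw [hL, hf, key_identity k, hm]; ring
  -- m is odd
  have hmodd : Odd m := by
    obtain ⟨j, hj⟩ := Int.even_mul_succ_self (k : ℤ)
    exact ⟨j + 2 * (k : ℤ) + 2, by rw [hm]; linarith [hj]⟩
  -- m is coprime to k + 4
  have hcop : IsCoprime m ((k : ℤ) + 4) := ⟨1, -((k : ℤ) + 1), by rw [hm]; ring⟩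
  apply Nat.dvd_antisymm
  · -- gcd m L ∣ gcd m f
    set g : ℕ := Int.gcd m L with hg
    have hgm : (g : ℤ) ∣ m := Int.gcd_dvd_left m L
    have hgL : (g : ℤ) ∣ L := Int.gcd_dvd_right m L
    have hg2L : (g : ℤ) ∣ ((k : ℤ) + 4) * f := by
      have : ((k : ℤ) + 4) * f = m * Fsum (k + 1) - 2 * L := by rw [key]; ring
      rw [this]
      exact dvd_sub (hgm.mul_right _) (hgL.mul_left 2)
    have hgcop : IsCoprime ((g : ℤ)) ((k : ℤ) + 4) := hcop.of_isCoprime_of_dvd_left hgm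
    have hgf : (g : ℤ) ∣ f := hgcop.dvd_of_dvd_mul_left hg2L
    exact_mod_cast Int.dvd_coe_gcd hgm hgf
  · -- gcd m f ∣ gcd m L
    set g : ℕ := Int.gcd m f with hg
    have hgm : (g : ℤ) ∣ m := Int.gcd_dvd_left m f
    have hgf : (g : ℤ) ∣ f := Int.gcd_dvd_right m f
    have hg2L : (g : ℤ) ∣ 2 * L := by
      rw [key]
      exact dvd_sub (hgm.mul_right _) (hgf.mul_left _)
    have hgodd : Odd (g : ℤ) := by
      rcases Int.even_or_odd (g : ℤ) with he | ho
      · exfalso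
        have : Even m := he.trans_dvd hgm
        exact (Int.not_odd_iff_even.mpr this) hmodd
      · exact ho
    have hgcop2 : IsCoprime ((g : ℤ)) (2 : ℤ) := by
      rw [Int.isCoprime_iff_gcd_eq_one]
      have : Odd g := by rwa [← Int.natAbs_natCast g, Int.natAbs_odd]
      simpa [Int.gcd] using Nat.coprime_two_right.mpr this
    have hgL : (g : ℤ) ∣ L := hgcop2.dvd_of_dvd_mul_left hg2L
    exact_mod_cast Int.dvd_coe_gcd hgm hgL
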